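/- Let k ≥ 1 and n > 2k be integers. There exists a constant C = C(n, k) > 0 such that for all real numbers 0 < δ < 1, all 0 < μ₁ ≤ δ and 0 < μ₂ ≤ δ, and every Θ ∈ ℝⁿ with |Θ| ≤ 3δ, one has ∫_{B(0, 2δ) ∖ B(Θ, δ/2)} μ₁^{(n+2k)/2} (μ₁ + |x − Θ|)^{−(n+2k)} · μ₂^{(n−2k)/2} (μ₂² + |x|²)^{(2k−n)/2} dx ≤ C · (μ₁μ₂/(μ₁² + |Θ|²))^{(n−2k)/2} · (μ₁/δ)^{2k}. -/

import Mathlib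

open MeasureTheory Real

lemma polar_ball (n : ℕ) (hn : 0 < n) (R : ℝ) (h₀ : ℝ → ℝ) :
    ∫ x in Metric.ball (0 : EuclideanSpace ℝ (Fin n)) R, h₀ ‖x‖ =
      n * (volume (Metric.ball (0 : EuclideanSpace ℝ (Fin n)) 1)).toReal *
        ∫ y in Set.Ioo (0:ℝ) R, y ^ (n - 1) * h₀ y := by
  haveI : Nonempty (Fin n) := ⟨⟨0, hn⟩⟩
  have h1 : ∫ x in Metric.ball (0 : EuclideanSpace ℝ (Fin n)) R, h₀ ‖x‖
      = ∫ x : EuclideanSpace ℝ (Fin n), Set.indicator (Set.Iio R) h₀ ‖x‖ := by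
    rw [← integral_indicator measurableSet_ball]
    congr 1; funext x
    by_cases hx : ‖x‖ < R
    · simp [Set.indicator_apply, mem_ball_zero_iff, hx]
    · simp [Set.indicator_apply, mem_ball_zero_iff, hx]
  rw [h1, integral_fun_norm_addHaar volume (Set.indicator (Set.Iio R) h₀)]
  have h2 : ∫ y in Set.Ioi (0:ℝ),
      y ^ (Module.finrank ℝ (EuclideanSpace ℝ (Fin n)) - 1) • Set.indicator (Set.Iio R) h₀ y
      = ∫ y in Set.Ioo (0:ℝ) R, y ^ (n - 1) * h₀ y := by
    rw [finrank_euclideanSpace_fin]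
    have : ∀ y : ℝ, y ^ (n - 1) • Set.indicator (Set.Iio R) h₀ y
        = Set.indicator (Set.Iio R) (fun y => y ^ (n - 1) * h₀ y) y := by
      intro y
      by_cases hy : y ∈ Set.Iio R <;> simp [hy]
    simp_rw [this]
    rw [setIntegral_indicator measurableSet_Iio, Set.Ioi_inter_Iio]
  rw [h2, finrank_euclideanSpace_fin, nsmul_eq_mul, smul_eq_mul, mul_assoc]
  rfl

lemma one_dim (n k : ℕ) (hk : 1 ≤ k) (hn : 2*k < n) (R c : ℝ) (hR : 0 < R) (hc : 0 < c) :
    ∫ y in Set.Ioo (0:ℝ) R, y ^ (n-1) * (c + y^2) ^ (((2*k:ℝ)-n)/2) ≤ R^(2*k)/(2*k) := by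
  have hn1 : 1 ≤ n := le_trans (by omega) hn.le
  have key : ∫ y in Set.Ioo (0:ℝ) R, y ^ (n-1) * (c + y^2) ^ (((2*k:ℝ)-n)/2)
      ≤ ∫ y in Set.Ioo (0:ℝ) R, y ^ (2*k-1) := by
    apply setIntegral_mono_on
    · apply (Continuous.integrableOn_Icc ?_).mono_set Set.Ioo_subset_Icc_self
      apply (continuous_pow _).mul
      apply Continuous.rpow_const (by continuity)
      intro y; exact Or.inl (by positivity)
    · exact ((continuous_pow _).integrableOn_Icc).mono_set Set.Ioo_subset_Icc_self
    · exact measurableSet_Ioo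
    · intro y hy
      have hy0 : 0 < y := hy.1
      have h1 : (c + y^2) ^ (((2*k:ℝ)-n)/2) ≤ (y^2) ^ (((2*k:ℝ)-n)/2) := by
        apply rpow_le_rpow_of_nonpos (by positivity) (by linarith)
        have : (2*k:ℝ) ≤ n := by exact_mod_cast hn.le
        linarith
      calc y ^ (n-1) * (c + y^2) ^ (((2*k:ℝ)-n)/2)
          ≤ y ^ (n-1) * (y^2) ^ (((2*k:ℝ)-n)/2) := by
            apply mul_le_mul_of_nonneg_left h1 (by positivity)
        _ = y ^ (2*k-1) := by
            rw [← rpow_natCast y (n-1), ← rpow_natCast y 2, ← rpow_natCast y (2*k-1),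
              ← rpow_mul hy0.le, ← rpow_add hy0]
            congr 1
            push_cast [Nat.cast_sub hn1, Nat.cast_sub (by omega : 1 ≤ 2*k)]
            ring
  refine key.trans ?_
  have : ∫ y in Set.Ioo (0:ℝ) R, y ^ (2*k-1) = R^(2*k)/(2*k) := by
    rw [← integral_Ioc_eq_integral_Ioo, ← intervalIntegral.integral_of_le hR.le,
      integral_pow]
    rw [Nat.sub_add_cancel (by omega : 1 ≤ 2*k), zero_pow (by omega : 2*k ≠ 0),
      Nat.cast_sub (by omega : 1 ≤ 2*k)]
    push_cast
    ring_nf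
  rw [this]

lemma alg_eq (n k : ℕ) (hk : 1 ≤ k) (hn : 2*k < n) (K : ℝ) (hK : 0 < K)
    (δ μ₁ μ₂ : ℝ) (hδ : 0 < δ) (h1 : 0 < μ₁) (h2 : 0 < μ₂) :
    μ₁^(((n:ℝ)+2*k)/2) * (δ/2)^(-((n:ℝ)+2*k)) * μ₂^(((n:ℝ)-2*k)/2) * (K*((2*δ)^(2*k)/(2*k)))
      = (K/(2*k) * 2^((n:ℝ)+2*k) * 2^(2*k) * 10^(((n:ℝ)-2*k)/2))
        * (μ₁*μ₂/(10*δ^2))^(((n:ℝ)-2*k)/2) * (μ₁/δ)^(2*k) := by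
  have hk0 : (0:ℝ) < 2*k := by positivity
  have hL : (0:ℝ) < μ₁^(((n:ℝ)+2*k)/2) * (δ/2)^(-((n:ℝ)+2*k)) * μ₂^(((n:ℝ)-2*k)/2) *
      (K*((2*δ)^(2*k)/(2*k))) := by positivity
  have hR : (0:ℝ) < (K/(2*k) * 2^((n:ℝ)+2*k) * 2^(2*k) * 10^(((n:ℝ)-2*k)/2))
        * (μ₁*μ₂/(10*δ^2))^(((n:ℝ)-2*k)/2) * (μ₁/δ)^(2*k) := by positivity
  rw [← Real.exp_log hL, ← Real.exp_log hR, Real.exp_eq_exp]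
  simp (disch := positivity) only [Real.log_mul, Real.log_div, Real.log_rpow, Real.log_pow,
    Real.log_inv, ne_eq]
  push_cast
  ring

theorem stmt9 (k n : ℕ) (hk : 1 ≤ k) (hn : 2 * k < n) :
    ∃ C : ℝ, 0 < C ∧
      ∀ δ μ₁ μ₂ : ℝ, 0 < δ → δ < 1 → 0 < μ₁ → μ₁ ≤ δ → 0 < μ₂ → μ₂ ≤ δ →
      ∀ Θ : EuclideanSpace ℝ (Fin n), ‖Θ‖ ≤ 3 * δ →
        ∫ x in Metric.ball (0 : EuclideanSpace ℝ (Fin n)) (2 * δ) \ Metric.ball Θ (δ / 2),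
            μ₁ ^ (((n : ℝ) + 2 * k) / 2) * (μ₁ + ‖x - Θ‖) ^ (-((n : ℝ) + 2 * k)) *
              (μ₂ ^ (((n : ℝ) - 2 * k) / 2) *
                (μ₂ ^ 2 + ‖x‖ ^ 2) ^ (((2 * k : ℝ) - n) / 2)) ≤
          C * (μ₁ * μ₂ / (μ₁ ^ 2 + ‖Θ‖ ^ 2)) ^ (((n : ℝ) - 2 * k) / 2) *
            (μ₁ / δ) ^ (2 * k) := by
  haveI : Nonempty (Fin n) := ⟨⟨0, by omega⟩⟩
  set E := EuclideanSpace ℝ (Fin n) with hE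
  set V := (volume (Metric.ball (0 : E) 1)).toReal with hVdef
  have hV0 : 0 < V :=
    ENNReal.toReal_pos (Metric.measure_ball_pos _ _ one_pos).ne' measure_ball_lt_top.ne
  have hnk : (2*k : ℝ) < (n : ℝ) := by exact_mod_cast hn
  have hm0 : (0:ℝ) ≤ ((n:ℝ) - 2*k)/2 := by linarith
  have hn0 : (0:ℝ) < n := by exact_mod_cast Nat.pos_of_ne_zero (by omega)
  have hk0 : (0:ℝ) < k := by exact_mod_cast hk
  have hNV : (0:ℝ) < n * V := mul_pos hn0 hV0
  have hC0 : (0:ℝ) < (n*V)/(2*k) * 2^((n:ℝ)+2*k) * 2^(2*k) * 10^(((n:ℝ)-2*k)/2) :=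
    mul_pos (mul_pos (mul_pos (div_pos hNV (by linarith)) (rpow_pos_of_pos two_pos _))
      (pow_pos two_pos _)) (rpow_pos_of_pos (by norm_num) _)
  refine ⟨(n*V)/(2*k) * 2^((n:ℝ)+2*k) * 2^(2*k) * 10^(((n:ℝ)-2*k)/2), hC0, ?_⟩
  intro δ μ₁ μ₂ hδ hδ1 hμ1 hμ1d hμ2 hμ2d Θ hΘ
  set S : Set E := Metric.ball (0 : E) (2 * δ) \ Metric.ball Θ (δ / 2) with hS
  set q : ℝ := ((2 * k : ℝ) - n) / 2 with hq
  set m : ℝ := ((n : ℝ) - 2 * k) / 2 with hm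
  set P : ℝ := (n : ℝ) + 2 * k with hP
  have hP0 : (0:ℝ) ≤ P := by positivity
  set A : ℝ := μ₁ ^ (P/2) * (δ/2) ^ (-P) * μ₂ ^ m with hA
  have hA0 : 0 < A := by positivity
  have c1 : Continuous fun x : E => (μ₁ + ‖x - Θ‖) ^ (-P) := by
    apply Continuous.rpow_const
      (continuous_const.add ((continuous_id.sub continuous_const).norm))
    intro x; exact Or.inl (ne_of_gt (add_pos_of_pos_of_nonneg hμ1 (norm_nonneg _)))
  have c2 : Continuous fun x : E => (μ₂^2 + ‖x‖^2) ^ q := by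
    apply Continuous.rpow_const (continuous_const.add (continuous_norm.pow 2))
    intro x; exact Or.inl (ne_of_gt (add_pos_of_pos_of_nonneg (pow_pos hμ2 2) (pow_nonneg (norm_nonneg _) 2)))
  have cf : Continuous fun x : E =>
      μ₁ ^ (P/2) * (μ₁ + ‖x - Θ‖) ^ (-P) * (μ₂ ^ m * (μ₂ ^ 2 + ‖x‖ ^ 2) ^ q) :=
    (continuous_const.mul c1).mul (continuous_const.mul c2)
  have cg : Continuous fun x : E => A * (μ₂ ^ 2 + ‖x‖ ^ 2) ^ q := continuous_const.mul c2
  have hSsub : S ⊆ Metric.closedBall (0:E) (2*δ) :=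
    Set.diff_subset.trans Metric.ball_subset_closedBall
  have hfint : IntegrableOn (fun x : E =>
      μ₁ ^ (P/2) * (μ₁ + ‖x - Θ‖) ^ (-P) * (μ₂ ^ m * (μ₂ ^ 2 + ‖x‖ ^ 2) ^ q)) S :=
    (cf.continuousOn.integrableOn_compact (isCompact_closedBall _ _)).mono_set hSsub
  have hgball : IntegrableOn (fun x : E => A * (μ₂ ^ 2 + ‖x‖ ^ 2) ^ q)
      (Metric.ball (0:E) (2*δ)) :=
    (cg.continuousOn.integrableOn_compact (isCompact_closedBall _ _)).mono_set
      Metric.ball_subset_closedBall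
  have hgS : IntegrableOn (fun x : E => A * (μ₂ ^ 2 + ‖x‖ ^ 2) ^ q) S :=
    hgball.mono_set Set.diff_subset
  have step1 : ∫ x in S,
      μ₁ ^ (P/2) * (μ₁ + ‖x - Θ‖) ^ (-P) * (μ₂ ^ m * (μ₂ ^ 2 + ‖x‖ ^ 2) ^ q)
      ≤ ∫ x in S, A * (μ₂ ^ 2 + ‖x‖ ^ 2) ^ q := by
    apply setIntegral_mono_on hfint hgS (measurableSet_ball.diff measurableSet_ball)
    intro x hx
    have hxθ : δ/2 ≤ ‖x - Θ‖ := by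
      have h2 := hx.2
      rw [Metric.mem_ball, dist_eq_norm] at h2
      linarith [not_lt.mp h2]
    have h₁ : (μ₁ + ‖x - Θ‖) ^ (-P) ≤ (δ/2) ^ (-P) := by
      apply rpow_le_rpow_of_nonpos (by positivity) (by linarith) (by linarith)
    calc μ₁ ^ (P/2) * (μ₁ + ‖x - Θ‖) ^ (-P) * (μ₂ ^ m * (μ₂ ^ 2 + ‖x‖ ^ 2) ^ q)
        = μ₁ ^ (P/2) * μ₂ ^ m * (μ₂ ^ 2 + ‖x‖ ^ 2) ^ q * (μ₁ + ‖x - Θ‖) ^ (-P) := by ring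
      _ ≤ μ₁ ^ (P/2) * μ₂ ^ m * (μ₂ ^ 2 + ‖x‖ ^ 2) ^ q * (δ/2) ^ (-P) := by
          apply mul_le_mul_of_nonneg_left h₁ (by positivity)
      _ = A * (μ₂ ^ 2 + ‖x‖ ^ 2) ^ q := by rw [hA]; ring
  have step2 : ∫ x in S, A * (μ₂ ^ 2 + ‖x‖ ^ 2) ^ q
      ≤ ∫ x in Metric.ball (0:E) (2*δ), A * (μ₂ ^ 2 + ‖x‖ ^ 2) ^ q := by
    apply setIntegral_mono_set hgball
    · exact Filter.Eventually.of_forall fun x => by positivity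
    · exact (Set.diff_subset : S ⊆ _).eventuallyLE
  have step3 : ∫ x in Metric.ball (0:E) (2*δ), A * (μ₂ ^ 2 + ‖x‖ ^ 2) ^ q
      = A * (n * V * ∫ y in Set.Ioo (0:ℝ) (2*δ), y ^ (n-1) * (μ₂^2 + y^2) ^ q) := by
    rw [integral_const_mul]
    congr 1
    exact polar_ball n (by omega) (2*δ) (fun y => (μ₂^2 + y^2) ^ q)
  have step4 : A * (n * V * ∫ y in Set.Ioo (0:ℝ) (2*δ), y ^ (n-1) * (μ₂^2 + y^2) ^ q)
      ≤ A * ((n*V) * ((2*δ)^(2*k)/(2*k))) := by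
    apply mul_le_mul_of_nonneg_left _ hA0.le
    apply mul_le_mul_of_nonneg_left _ hNV.le
    exact one_dim n k hk hn (2*δ) (μ₂^2) (by positivity) (by positivity)
  have step5 : A * ((n*V) * ((2*δ)^(2*k)/(2*k)))
      ≤ ((n*V)/(2*k) * 2^((n:ℝ)+2*k) * 2^(2*k) * 10^(((n:ℝ)-2*k)/2))
        * (μ₁ * μ₂ / (μ₁ ^ 2 + ‖Θ‖ ^ 2)) ^ m * (μ₁ / δ) ^ (2 * k) := by
    have heq := alg_eq n k hk hn (n*V) hNV δ μ₁ μ₂ hδ hμ1 hμ2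
    rw [← hP, ← hm, ← hA] at heq
    rw [heq]
    have hbase : μ₁ * μ₂ / (10 * δ^2) ≤ μ₁ * μ₂ / (μ₁ ^ 2 + ‖Θ‖ ^ 2) := by
      have h9 : μ₁ ^ 2 + ‖Θ‖ ^ 2 ≤ 10 * δ^2 := by
        have hΘ2 : ‖Θ‖^2 ≤ (3*δ)^2 := by
          apply sq_le_sq' (by linarith [norm_nonneg Θ]) hΘ
        nlinarith
      gcongr
    have hC0' := hC0.le
    rw [← hP, ← hm]
    apply mul_le_mul_of_nonneg_right _ (by positivity)
    apply mul_le_mul_of_nonneg_left _ hC0'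
    exact rpow_le_rpow (by positivity) hbase hm0
  calc ∫ x in S,
      μ₁ ^ (P/2) * (μ₁ + ‖x - Θ‖) ^ (-P) * (μ₂ ^ m * (μ₂ ^ 2 + ‖x‖ ^ 2) ^ q)
      ≤ ∫ x in S, A * (μ₂ ^ 2 + ‖x‖ ^ 2) ^ q := step1
    _ ≤ ∫ x in Metric.ball (0:E) (2*δ), A * (μ₂ ^ 2 + ‖x‖ ^ 2) ^ q := step2
    _ = A * (n * V * ∫ y in Set.Ioo (0:ℝ) (2*δ), y ^ (n-1) * (μ₂^2 + y^2) ^ q) := step3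
    _ ≤ A * ((n*V) * ((2*δ)^(2*k)/(2*k))) := step4
    _ ≤ _ := step5
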